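/- arXiv:2007.06893 — 3 statements merged into one kernel-verified Lean document; each statement's English description precedes it below -/
import Mathlib

section
/- Let Γ ⊆ Pⁿ be a finite set of exactly d = mn points in linearly general position for some integer m ≥ 2. (a) If F = H₁⋯H_m ∈ Φ(Γ)_m with each H_i a nonzero linear form, then the sets Γ ∩ V(H₁), …, Γ ∩ V(H_m) form a partition of Γ into m pairwise disjoint subsets each of cardinality exactly n. (b) Conversely, if Γ = Γ₁ ∪ ⋯ ∪ Γ_m is a partition of Γ into m subsets each of cardinality n, and for each i the linear form H_i ∈ S₁ \ {0} vanishes on Γ_i, then H₁⋯H_m ∈ Φ(Γ)_m. -/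
open MvPolynomial

noncomputable section

/-- A set `Γ` in projective `n`-space over `k` is in linearly general position if any
`n+1` or fewer of its points have linearly independent representative vectors. -/
def LinGenPos (k : Type*) [Field k] (n : ℕ)
    (Γ : Set (Projectivization k (Fin (n + 1) → k))) : Prop :=
  ∀ s : Finset (Projectivization k (Fin (n + 1) → k)), ↑s ⊆ Γ → s.card ≤ n + 1 →
    LinearIndependent k
      (fun p : s => Projectivization.rep (p : Projectivization k (Fin (n + 1) → k)))

/-- The subspace of polynomials vanishing at (fixed representatives of) all points of `Γ`. -/
def evalVanishing (k : Type*) [Field k] (n : ℕ)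
    (Γ : Set (Projectivization k (Fin (n + 1) → k))) :
    Submodule k (MvPolynomial (Fin (n + 1)) k) where
  carrier := {F | ∀ P ∈ Γ, eval (Projectivization.rep P) F = 0}
  add_mem' := fun ha hb P hP => by simp [ha P hP, hb P hP]
  zero_mem' := fun P hP => by simp
  smul_mem' := fun c F hF P hP => by simp [smul_eval, hF P hP]

/-- `I(Γ)_ℓ` : degree-`ℓ` homogeneous polynomials vanishing on `Γ`, as a `k`-subspace. -/
def gradedVanishing (k : Type*) [Field k] (n : ℕ)
    (Γ : Set (Projectivization k (Fin (n + 1) → k))) (ℓ : ℕ) :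
    Submodule k (MvPolynomial (Fin (n + 1)) k) :=
  homogeneousSubmodule (Fin (n + 1)) k ℓ ⊓ evalVanishing k n Γ

/-- `I(Γ)` : the (homogeneous) vanishing ideal of `Γ`, i.e. polynomials vanishing
at every vector of every line belonging to `Γ`. -/
def vanishingIdeal (k : Type*) [Field k] (n : ℕ)
    (Γ : Set (Projectivization k (Fin (n + 1) → k))) :
    Ideal (MvPolynomial (Fin (n + 1)) k) where
  carrier := {F | ∀ P ∈ Γ, ∀ c : k, eval (c • Projectivization.rep P) F = 0}
  add_mem' := fun ha hb P hP c => by simp [ha P hP c, hb P hP c]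
  zero_mem' := fun P hP c => by simp
  smul_mem' := fun a F hF P hP c => by simp [smul_eq_mul, hF P hP c]

/-- `Φ(Γ)_ℓ` : completely decomposable degree-`ℓ` elements of `I(Γ)`. -/
def Phi (k : Type*) [Field k] (n : ℕ)
    (Γ : Set (Projectivization k (Fin (n + 1) → k))) (ℓ : ℕ) :
    Set (MvPolynomial (Fin (n + 1)) k) :=
  {F | F ∈ gradedVanishing k n Γ ℓ ∧
    ∃ h : Fin ℓ → MvPolynomial (Fin (n + 1)) k,
      (∀ i, h i ≠ 0 ∧ (h i).IsHomogeneous 1) ∧ F = ∏ i, h i}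

/-- `S₁Φ(Γ)_m` : products of a nonzero linear form with an element of `Φ(Γ)_m`. -/
def S1Phi (k : Type*) [Field k] (n : ℕ)
    (Γ : Set (Projectivization k (Fin (n + 1) → k))) (m : ℕ) :
    Set (MvPolynomial (Fin (n + 1)) k) :=
  {G | ∃ h F, h ≠ 0 ∧ MvPolynomial.IsHomogeneous h 1 ∧ F ∈ Phi k n Γ m ∧ G = h * F}

/-- `λ_Γ(G)` : the number of points of `Γ` at which `G` vanishes. -/
def lambdaGamma (k : Type*) [Field k] (n : ℕ)
    (Γ : Set (Projectivization k (Fin (n + 1) → k)))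
    (G : MvPolynomial (Fin (n + 1)) k) : ℕ :=
  Set.ncard {P ∈ Γ | eval (Projectivization.rep P) G = 0}

lemma aux_degree_one_single {σ : Type*} {d : σ →₀ ℕ} (h : Finsupp.degree d = 1) :
    ∃ i, d = Finsupp.single i 1 := by
  classical
  have hne : d ≠ 0 := fun h0 => by simp [h0, map_zero] at h
  obtain ⟨i, hi⟩ := Finsupp.support_nonempty_iff.mpr hne
  have hdi : 1 ≤ d i := Nat.one_le_iff_ne_zero.mpr (Finsupp.mem_support_iff.mp hi)
  have hle : d i ≤ 1 := by
    have := Finset.single_le_sum (f := fun j => d j) (fun j _ => Nat.zero_le _) hi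
    rwa [← Finsupp.degree_apply, h] at this
  refine ⟨i, ?_⟩
  ext j
  rcases eq_or_ne j i with rfl | hj
  · simp only [Finsupp.single_eq_same]; omega
  · simp only [Finsupp.single_eq_of_ne' (Ne.symm hj)]
    by_contra hdj
    have hjmem : j ∈ d.support := Finsupp.mem_support_iff.mpr hdj
    have hsub : ({i, j} : Finset σ) ⊆ d.support := by
      intro x hx
      simp only [Finset.mem_insert, Finset.mem_singleton] at hx
      rcases hx with rfl | rfl <;> assumption
    have h2 : ∑ x ∈ ({i, j} : Finset σ), d x ≤ Finsupp.degree d := by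
      rw [Finsupp.degree_apply]
      exact Finset.sum_le_sum_of_subset hsub
    rw [Finset.sum_insert (by simpa using hj.symm), Finset.sum_singleton, h] at h2
    omega

lemma aux_eval_linear {σ : Type*} [Fintype σ] [DecidableEq σ] {k : Type*} [CommRing k]
    {H : MvPolynomial σ k} (hH : H.IsHomogeneous 1) :
    H = ∑ i, MvPolynomial.C (coeff (Finsupp.single i 1) H) * X i := by
  have hdeg : ∀ i : σ, Finsupp.degree (Finsupp.single i 1) = (1:ℕ) := by
    intro i
    rw [Finsupp.degree_apply, Finsupp.support_single_ne_zero _ one_ne_zero, Finset.sum_singleton]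
    exact Finsupp.single_eq_same
  ext d
  rw [coeff_sum]
  rcases eq_or_ne (Finsupp.degree d) 1 with hd | hd
  · obtain ⟨i, rfl⟩ := aux_degree_one_single hd
    rw [Finset.sum_eq_single i]
    · simp [coeff_C_mul, coeff_X']
    · intro j _ hj
      have : Finsupp.single i (1:ℕ) ≠ Finsupp.single j 1 := by
        intro hs
        exact hj ((Finsupp.single_left_injective one_ne_zero) hs.symm)
      simp only [coeff_C_mul, coeff_X']
      rw [if_neg (fun h => this h.symm)]
      ring
    · simp
  · rw [hH.coeff_eq_zero hd]
    refine (Finset.sum_eq_zero ?_).symm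
    intro j _
    have : d ≠ Finsupp.single j 1 := by rintro rfl; exact hd (hdeg j)
    simp [coeff_C_mul, coeff_X', Ne.symm this]

/-- The linear functional on `k^{n+1}` attached to a degree-1 form. -/
def auxL {n : ℕ} {k : Type*} [Field k] (H : MvPolynomial (Fin (n+1)) k) :
    (Fin (n+1) → k) →ₗ[k] k where
  toFun v := ∑ i, coeff (Finsupp.single i 1) H * v i
  map_add' u v := by simp [mul_add, Finset.sum_add_distrib]
  map_smul' c v := by
    simp [Finset.mul_sum, smul_eq_mul]
    ring_nf
    congr 1; ext i; ring

lemma auxL_eval {n : ℕ} {k : Type*} [Field k] {H : MvPolynomial (Fin (n+1)) k}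
    (hH : H.IsHomogeneous 1) (v : Fin (n+1) → k) : eval v H = auxL H v := by
  conv_lhs => rw [aux_eval_linear hH]
  simp [auxL, eval_sum]

lemma auxL_ne_zero {n : ℕ} {k : Type*} [Field k] {H : MvPolynomial (Fin (n+1)) k}
    (hH : H.IsHomogeneous 1) (hH0 : H ≠ 0) : auxL H ≠ 0 := by
  have : ∃ i, coeff (Finsupp.single i 1) H ≠ 0 := by
    by_contra hall
    push_neg at hall
    apply hH0
    rw [aux_eval_linear hH]
    simp [hall]
  obtain ⟨i, hi⟩ := this
  intro hL
  apply hi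
  have := congrArg (fun L : (Fin (n+1) → k) →ₗ[k] k => L (Pi.single i 1)) hL
  simpa [auxL, Pi.single_apply, mul_ite, Finset.sum_ite_eq'] using this

lemma aux_card_vanish_le {k : Type*} [Field k] {n : ℕ}
    {Γ : Set (Projectivization k (Fin (n + 1) → k))}
    (hlgp : ∀ s : Finset (Projectivization k (Fin (n + 1) → k)), ↑s ⊆ Γ → s.card ≤ n + 1 →
      LinearIndependent k
        (fun p : s => Projectivization.rep (p : Projectivization k (Fin (n + 1) → k))))
    {H : MvPolynomial (Fin (n+1)) k} (hH0 : H ≠ 0) (hH1 : H.IsHomogeneous 1)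
    (s : Finset (Projectivization k (Fin (n + 1) → k))) (hs : ↑s ⊆ Γ)
    (hv : ∀ P ∈ s, eval (Projectivization.rep P) H = 0) :
    s.card ≤ n := by
  classical
  by_contra hlt
  push_neg at hlt
  obtain ⟨t, hts, htcard⟩ := Finset.exists_subset_card_eq (s := s) (n := n+1) hlt
  have hli := hlgp t ((Finset.coe_subset.mpr hts).trans hs) (le_of_eq htcard)
  have hker : ∀ p : t, Projectivization.rep (p : Projectivization k (Fin (n + 1) → k))
      ∈ LinearMap.ker (auxL H) := by
    intro p
    rw [LinearMap.mem_ker, ← auxL_eval hH1]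
    exact hv _ (hts p.2)
  let f : t → LinearMap.ker (auxL H) := fun p => ⟨_, hker p⟩
  have hlif : LinearIndependent k f := by
    apply LinearIndependent.of_comp (LinearMap.ker (auxL H)).subtype
    exact hli
  have hcard := hlif.fintype_card_le_finrank
  have hktop : LinearMap.ker (auxL H) ≠ ⊤ := by
    intro h
    exact auxL_ne_zero hH1 hH0 (LinearMap.ker_eq_top.mp h)
  have hfr : Module.finrank k (LinearMap.ker (auxL H)) < n + 1 := by
    have := Submodule.finrank_lt (K := k) hktop
    rwa [Module.finrank_fintype_fun_eq_card, Fintype.card_fin] at this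
  rw [Fintype.card_coe, htcard] at hcard
  omega

/-- For `Γ` a set of exactly `mn` points in linearly general position, `m ≥ 2`:
(a) every `F = H₁⋯H_m ∈ Φ(Γ)_m` induces a partition of `Γ` into the `m` pairwise disjoint
sets `Γ ∩ V(Hᵢ)`, each of cardinality `n`; (b) conversely, linear forms vanishing on the
parts of such a partition multiply to an element of `Φ(Γ)_m`. -/
theorem phi_partition_correspondence (k : Type*) [Field k] [IsAlgClosed k] (n m : ℕ)
    (hn : 1 ≤ n) (hm : 2 ≤ m) (Γ : Set (Projectivization k (Fin (n + 1) → k)))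
    (hfin : Γ.Finite) (hcard : Γ.ncard = m * n) (hlgp : LinGenPos k n Γ) :
    (∀ H : Fin m → MvPolynomial (Fin (n + 1)) k,
      (∀ i, H i ≠ 0 ∧ (H i).IsHomogeneous 1) → (∏ i, H i) ∈ Phi k n Γ m →
        ((∀ i j, i ≠ j →
            Disjoint {P ∈ Γ | eval (Projectivization.rep P) (H i) = 0}
              {P ∈ Γ | eval (Projectivization.rep P) (H j) = 0}) ∧
          (⋃ i, {P ∈ Γ | eval (Projectivization.rep P) (H i) = 0}) = Γ ∧
          ∀ i, Set.ncard {P ∈ Γ | eval (Projectivization.rep P) (H i) = 0} = n)) ∧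
    (∀ (G : Fin m → Set (Projectivization k (Fin (n + 1) → k)))
        (H : Fin m → MvPolynomial (Fin (n + 1)) k),
      (⋃ i, G i) = Γ → (∀ i j, i ≠ j → Disjoint (G i) (G j)) →
      (∀ i, Set.ncard (G i) = n) →
      (∀ i, H i ≠ 0 ∧ (H i).IsHomogeneous 1) →
      (∀ i, ∀ P ∈ G i, eval (Projectivization.rep P) (H i) = 0) →
        (∏ i, H i) ∈ Phi k n Γ m) := by
  classical
  constructor
  · intro H hH hF
    set Fs := hfin.toFinset with hFs
    have hFscard : Fs.card = m * n := by
      rw [Set.ncard_eq_toFinset_card Γ hfin] at hcard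
      exact hcard
    set B : Fin m → Finset (Projectivization k (Fin (n + 1) → k)) :=
      fun i => Fs.filter (fun P => eval (Projectivization.rep P) (H i) = 0) with hB
    have hBmem : ∀ i P, P ∈ B i ↔ P ∈ Γ ∧ eval (Projectivization.rep P) (H i) = 0 := by
      intro i P
      simp [hB, Finset.mem_filter, hFs, hfin.mem_toFinset]
    have hBset : ∀ i, {P ∈ Γ | eval (Projectivization.rep P) (H i) = 0} = ↑(B i) := by
      intro i; ext P; simp [hBmem i P]
    have hBsub : ∀ i, ↑(B i) ⊆ Γ := fun i P hP => ((hBmem i P).mp hP).1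
    have hBn : ∀ i, (B i).card ≤ n := by
      intro i
      exact aux_card_vanish_le hlgp (hH i).1 (hH i).2 (B i) (hBsub i)
        (fun P hP => ((hBmem i P).mp hP).2)
    have hvan : ∀ P ∈ Γ, eval (Projectivization.rep P) (∏ i, H i) = 0 :=
      (Submodule.mem_inf.mp hF.1).2
    have hcover : ∀ P ∈ Γ, ∃ i, eval (Projectivization.rep P) (H i) = 0 := by
      intro P hP
      have h0 := hvan P hP
      rw [map_prod] at h0
      obtain ⟨i, _, hi⟩ := Finset.prod_eq_zero_iff.mp h0
      exact ⟨i, hi⟩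
    have hsubU : Fs ⊆ Finset.univ.biUnion B := by
      intro P hP
      obtain ⟨i, hi⟩ := hcover P (hfin.mem_toFinset.mp hP)
      exact Finset.mem_biUnion.mpr ⟨i, Finset.mem_univ _,
        (hBmem i P).mpr ⟨hfin.mem_toFinset.mp hP, hi⟩⟩
    obtain ⟨m', rfl⟩ : ∃ m', m = m' + 1 := ⟨m - 1, by omega⟩
    have hmul : (m' + 1) * n = m' * n + n := by ring
    have htot : (m' + 1) * n ≤ ∑ i, (B i).card :=
      calc (m' + 1) * n = Fs.card := hFscard.symm
        _ ≤ (Finset.univ.biUnion B).card := Finset.card_le_card hsubU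
        _ ≤ ∑ i, (B i).card := Finset.card_biUnion_le
    have herasesum : ∀ j : Fin (m' + 1), ∑ i ∈ Finset.univ.erase j, (B i).card ≤ m' * n := by
      intro j
      have h := Finset.sum_le_card_nsmul (Finset.univ.erase j) (fun i => (B i).card) n
        (fun i _ => hBn i)
      rwa [Finset.card_erase_of_mem (Finset.mem_univ j), Finset.card_univ, Fintype.card_fin,
        Nat.add_sub_cancel, smul_eq_mul] at h
    have hBeach : ∀ j, (B j).card = n := by
      intro j
      have h1 := herasesum j
      have h2 : (B j).card + ∑ i ∈ Finset.univ.erase j, (B i).card = ∑ i, (B i).card :=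
        Finset.add_sum_erase Finset.univ (fun i => (B i).card) (Finset.mem_univ j)
      have h3 := hBn j
      omega
    refine ⟨?_, ?_, ?_⟩
    · intro i j hij
      rw [Set.disjoint_left]
      intro P hPi hPj
      obtain ⟨hPΓ, hPi0⟩ := hPi
      obtain ⟨-, hPj0⟩ := hPj
      have hPB : P ∈ B i := (hBmem i P).mpr ⟨hPΓ, hPi0⟩
      have hPBj : P ∈ B j := (hBmem j P).mpr ⟨hPΓ, hPj0⟩
      have hsub2 : Fs ⊆ ((B i).erase P) ∪ (Finset.univ.erase i).biUnion B := by
        intro Q hQ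
        obtain ⟨l, hl⟩ := hcover Q (hfin.mem_toFinset.mp hQ)
        rcases eq_or_ne l i with rfl | hli
        · rcases eq_or_ne Q P with rfl | hQP
          · exact Finset.mem_union_right _ (Finset.mem_biUnion.mpr
              ⟨j, Finset.mem_erase.mpr ⟨Ne.symm hij, Finset.mem_univ _⟩, hPBj⟩)
          · exact Finset.mem_union_left _ (Finset.mem_erase.mpr
              ⟨hQP, (hBmem l Q).mpr ⟨hfin.mem_toFinset.mp hQ, hl⟩⟩)
        · exact Finset.mem_union_right _ (Finset.mem_biUnion.mpr
            ⟨l, Finset.mem_erase.mpr ⟨hli, Finset.mem_univ _⟩,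
              (hBmem l Q).mpr ⟨hfin.mem_toFinset.mp hQ, hl⟩⟩)
      have hc1 : ((B i).erase P).card ≤ n - 1 := by
        rw [Finset.card_erase_of_mem hPB]
        have := hBn i; omega
      have hc2 : ((Finset.univ.erase i).biUnion B).card ≤ m' * n :=
        le_trans Finset.card_biUnion_le (herasesum i)
      have hle1 := Finset.card_le_card hsub2
      have hle2 := Finset.card_union_le ((B i).erase P) ((Finset.univ.erase i).biUnion B)
      omega
    · ext P
      simp only [Set.mem_iUnion, Set.mem_setOf_eq]
      constructor
      · rintro ⟨i, hPΓ, -⟩; exact hPΓ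
      · intro hP
        obtain ⟨i, hi⟩ := hcover P hP
        exact ⟨i, hP, hi⟩
    · intro i
      rw [hBset i, Set.ncard_coe_finset]
      exact hBeach i
  · intro G H hunion hdisj hcardG hH hvanG
    refine ⟨Submodule.mem_inf.mpr ⟨?_, ?_⟩, H, hH, rfl⟩
    · rw [mem_homogeneousSubmodule]
      have h := MvPolynomial.IsHomogeneous.prod Finset.univ H (fun _ => 1)
        (fun i _ => (hH i).2)
      simpa using h
    · intro P hP
      rw [← hunion] at hP
      obtain ⟨i, hi⟩ := Set.mem_iUnion.mp hP
      rw [map_prod]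
      exact Finset.prod_eq_zero (Finset.mem_univ i) (hvanG i P hi)
end
end

section
/- Let Γ ⊆ Pⁿ be a finite set of d points in linearly general position and let ℓ ≥ 1 be an integer with d ≤ ℓn + 1. Then Γ is ℓ-normal; equivalently, the k-vector space I(Γ)_ℓ of degree-ℓ homogeneous polynomials vanishing on Γ has dimension exactly C(n+ℓ, n) − d (so the evaluation map from S_ℓ to k^Γ, given by evaluating at fixed representative vectors of the points of Γ, is surjective). -/
open MvPolynomial

noncomputable section

lemma degEq (α : Type*) [DecidableEq α] (s : Multiset α) :
    Finsupp.degree (Multiset.toFinsupp s) = Multiset.card s := by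
  rw [show Finsupp.degree (Multiset.toFinsupp s)
      = (Multiset.toFinsupp s).sum fun _ => id from rfl, Multiset.toFinsupp_sum_eq]

def degEquivSym (n ℓ : ℕ) : Sym (Fin (n + 1)) ℓ ≃ {d : Fin (n + 1) →₀ ℕ // d.degree = ℓ} :=
  Equiv.subtypeEquiv Multiset.toFinsupp.toEquiv (fun s => by
    simp only [AddEquiv.toEquiv_eq_coe, EquivLike.coe_coe]
    rw [degEq])

instance homIdxFintype (n ℓ : ℕ) : Fintype {d : Fin (n + 1) →₀ ℕ // d.degree = ℓ} :=
  Fintype.ofEquiv _ (degEquivSym n ℓ)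

lemma card_homIdx (n ℓ : ℕ) :
    Fintype.card {d : Fin (n + 1) →₀ ℕ // d.degree = ℓ} = (n + ℓ).choose ℓ := by
  rw [← Fintype.card_congr (degEquivSym n ℓ), Sym.card_sym_eq_choose]
  congr 1
  simp

def homBasis (k : Type*) [Field k] (n ℓ : ℕ) :
    Module.Basis {d : Fin (n + 1) →₀ ℕ // d.degree = ℓ} k
      (homogeneousSubmodule (Fin (n + 1)) k ℓ) :=
  (basisRestrictSupport k {d : Fin (n + 1) →₀ ℕ | d.degree = ℓ}).map
    (LinearEquiv.ofEq _ _ (homogeneousSubmodule_eq_finsupp_supported (Fin (n + 1)) k ℓ).symm)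

instance homFD (k : Type*) [Field k] (n ℓ : ℕ) :
    FiniteDimensional k (homogeneousSubmodule (Fin (n + 1)) k ℓ) :=
  Module.Finite.of_basis (homBasis k n ℓ)

lemma finrank_hom (k : Type*) [Field k] (n ℓ : ℕ) :
    Module.finrank k (homogeneousSubmodule (Fin (n + 1)) k ℓ) = (n + ℓ).choose ℓ := by
  rw [Module.finrank_eq_card_basis (homBasis k n ℓ), card_homIdx]


/-- A linear functional as a degree-1 homogeneous polynomial. -/
def linPoly {k : Type*} [Field k] {n : ℕ} (φ : (Fin (n + 1) → k) →ₗ[k] k) :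
    MvPolynomial (Fin (n + 1)) k :=
  ∑ j, C (φ fun j' => if j = j' then 1 else 0) * X j

lemma linPoly_isHomogeneous {k : Type*} [Field k] {n : ℕ} (φ : (Fin (n + 1) → k) →ₗ[k] k) :
    (linPoly φ).IsHomogeneous 1 :=
  IsHomogeneous.sum _ _ _ fun j _ => (isHomogeneous_X _ _).C_mul _

lemma eval_linPoly {k : Type*} [Field k] {n : ℕ} (φ : (Fin (n + 1) → k) →ₗ[k] k)
    (v : Fin (n + 1) → k) : eval v (linPoly φ) = φ v := by
  rw [LinearMap.pi_apply_eq_sum_univ φ v, linPoly, map_sum]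
  refine Finset.sum_congr rfl fun j _ => ?_
  rw [map_mul, eval_C, eval_X, smul_eq_mul, mul_comm]

lemma interpolation {k : Type*} [Field k] {n ℓ : ℕ} (hn : 1 ≤ n)
    {Γ : Set (Projectivization k (Fin (n + 1) → k))} (hfin : Γ.Finite)
    (hlgp : LinGenPos k n Γ) (hcard : Γ.ncard ≤ ℓ * n + 1)
    {P : Projectivization k (Fin (n + 1) → k)} (hP : P ∈ Γ) :
    ∃ F : MvPolynomial (Fin (n + 1)) k, F.IsHomogeneous ℓ ∧
      eval (Projectivization.rep P) F ≠ 0 ∧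
      ∀ Q ∈ Γ, Q ≠ P → eval (Projectivization.rep Q) F = 0 := by
  classical
  set Γ' : Set (Projectivization k (Fin (n + 1) → k)) := Γ \ {P} with hΓ'
  haveI : Fintype Γ' := (hfin.subset Set.diff_subset).fintype
  have hc : Fintype.card Γ' ≤ ℓ * n := by
    have h1 : Γ'.ncard = Γ.ncard - 1 := Set.ncard_diff_singleton_of_mem hP
    have h2 : 0 < Γ.ncard := (Set.ncard_pos hfin).2 ⟨P, hP⟩
    have h3 : Fintype.card Γ' = Γ'.ncard := by
      rw [← Nat.card_coe_set_eq, Nat.card_eq_fintype_card]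
    omega
  let e : Γ' ≃ Fin (Fintype.card Γ') := Fintype.equivFin _
  have hn0 : 0 < n := hn
  let g : Γ' → Fin ℓ := fun x => ⟨(e x : ℕ) / n, by
    rw [Nat.div_lt_iff_lt_mul hn0]
    exact lt_of_lt_of_le (e x).2 hc⟩
  -- the finset of points in fiber i
  let Si : Fin ℓ → Finset (Projectivization k (Fin (n + 1) → k)) := fun i =>
    (Finset.univ.filter (fun x : Γ' => g x = i)).image Subtype.val
  have hSisub : ∀ i, (↑(Si i) : Set (Projectivization k (Fin (n + 1) → k))) ⊆ Γ' := by
    intro i z hz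
    rw [Finset.mem_coe, Finset.mem_image] at hz
    obtain ⟨x, -, rfl⟩ := hz
    exact x.2
  have hSicard : ∀ i, (Si i).card ≤ n := by
    intro i
    have hstep : (Finset.univ.filter (fun x : Γ' => g x = i)).card ≤ (Finset.univ : Finset (Fin n)).card := by
      refine Finset.card_le_card_of_injOn (fun x => ⟨(e x : ℕ) % n, Nat.mod_lt _ hn0⟩)
        (fun _ _ => Finset.mem_univ _) ?_
      intro x hx y hy hxy
      simp only [Finset.mem_coe, Finset.mem_filter] at hx hy
      have hgx : (e x : ℕ) / n = i := congrArg Fin.val hx.2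
      have hgy : (e y : ℕ) / n = i := congrArg Fin.val hy.2
      have hm : (e x : ℕ) % n = (e y : ℕ) % n := congrArg Fin.val hxy
      have : (e x : ℕ) = (e y : ℕ) := by
        conv_lhs => rw [← Nat.div_add_mod (e x : ℕ) n]
        conv_rhs => rw [← Nat.div_add_mod (e y : ℕ) n]
        rw [hgx, hgy, hm]
      exact e.injective (Fin.val_injective this)
    calc (Si i).card ≤ (Finset.univ.filter (fun x : Γ' => g x = i)).card :=
          Finset.card_image_le
      _ ≤ n := by simpa using hstep
  -- P.rep is not in the span of the reps of points of Si i
  have hspan : ∀ i, Projectivization.rep P ∉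
      Submodule.span k (Projectivization.rep '' (↑(Si i) : Set (Projectivization k (Fin (n + 1) → k)))) := by
    intro i
    set s : Finset (Projectivization k (Fin (n + 1) → k)) := insert P (Si i) with hs
    have hsub : (s : Set _) ⊆ Γ := by
      intro z hz
      rcases Finset.mem_insert.1 hz with h | h
      · exact h ▸ hP
      · exact (hSisub i h).1
    have hcard' : s.card ≤ n + 1 := by
      refine le_trans (Finset.card_insert_le _ _) ?_
      exact Nat.add_le_add_right (hSicard i) 1
    have li := hlgp s hsub hcard'
    have hPs : P ∈ s := Finset.mem_insert_self _ _
    have hPnotin : (⟨P, hPs⟩ : s) ∉ {y : s | (y : Projectivization k (Fin (n + 1) → k)) ∈ Si i} := by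
      intro h
      exact (hSisub i h).2 rfl
    have himg : (fun p : s => Projectivization.rep (p : Projectivization k (Fin (n + 1) → k))) ''
        {y : s | (y : Projectivization k (Fin (n + 1) → k)) ∈ Si i}
        = Projectivization.rep '' (↑(Si i) : Set (Projectivization k (Fin (n + 1) → k))) := by
      ext z
      constructor
      · rintro ⟨⟨w, hws⟩, hw, rfl⟩
        exact ⟨w, hw, rfl⟩
      · rintro ⟨w, hw, rfl⟩
        exact ⟨⟨w, Finset.mem_insert_of_mem hw⟩, hw, rfl⟩
    rw [← himg]
    exact li.notMem_span_image hPnotin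
  -- choose dual functionals
  have hφ : ∀ i : Fin ℓ, ∃ φ : (Fin (n + 1) → k) →ₗ[k] k,
      φ (Projectivization.rep P) ≠ 0 ∧ ∀ z ∈ (↑(Si i) : Set (Projectivization k (Fin (n + 1) → k))), φ (Projectivization.rep z) = 0 := by
    intro i
    obtain ⟨f, hf1, hf2⟩ := Submodule.exists_dual_map_eq_bot_of_notMem (hspan i) inferInstance
    refine ⟨f, hf1, fun z hz => ?_⟩
    have hzmem : Projectivization.rep z ∈
        Submodule.span k (Projectivization.rep '' (↑(Si i) : Set (Projectivization k (Fin (n + 1) → k)))) :=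
      Submodule.subset_span ⟨z, hz, rfl⟩
    have := Submodule.map_le_iff_le_comap.1 hf2.le hzmem
    exact (Submodule.mem_bot k).1 (Submodule.mem_comap.1 this)
  choose φ hφP hφ0 using hφ
  refine ⟨∏ i, linPoly (φ i), ?_, ?_, ?_⟩
  · have := IsHomogeneous.prod Finset.univ (fun i => linPoly (φ i)) (fun _ => 1)
      (fun i _ => linPoly_isHomogeneous (φ i))
    simpa using this
  · rw [map_prod]
    refine Finset.prod_ne_zero_iff.2 fun i _ => ?_
    rw [eval_linPoly]
    exact hφP i
  · intro Q hQ hQP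
    have hQ' : Q ∈ Γ' := ⟨hQ, hQP⟩
    rw [map_prod]
    refine Finset.prod_eq_zero (Finset.mem_univ (g ⟨Q, hQ'⟩)) ?_
    rw [eval_linPoly]
    refine hφ0 _ _ ?_
    rw [Finset.mem_coe, Finset.mem_image]
    exact ⟨⟨Q, hQ'⟩, Finset.mem_filter.2 ⟨Finset.mem_univ _, rfl⟩, rfl⟩

/-- If `Γ ⊆ ℙⁿ` is a finite set of `d` points in linearly general position and
`d ≤ ℓn + 1`, then `Γ` is `ℓ`-normal: `dim_k I(Γ)_ℓ = C(n+ℓ,n) - d`, and the evaluation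
map from degree-`ℓ` forms to `k^Γ` is surjective. -/
theorem ell_normality (k : Type*) [Field k] [IsAlgClosed k] (n d ℓ : ℕ) (hn : 1 ≤ n)
    (hl : 1 ≤ ℓ) (Γ : Set (Projectivization k (Fin (n + 1) → k)))
    (hfin : Γ.Finite) (hcard : Γ.ncard = d) (hlgp : LinGenPos k n Γ)
    (hd : d ≤ ℓ * n + 1) :
    Module.finrank k (gradedVanishing k n Γ ℓ) = Nat.choose (n + ℓ) n - d ∧
      ∀ f : Γ → k, ∃ F : MvPolynomial (Fin (n + 1)) k, F.IsHomogeneous ℓ ∧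
        ∀ P : Γ, eval (Projectivization.rep (P : Projectivization k (Fin (n + 1) → k))) F
          = f P := by
  classical
  haveI : Fintype Γ := hfin.fintype
  have hcardΓ : Fintype.card Γ = d := by
    rw [← Nat.card_eq_fintype_card, Nat.card_coe_set_eq, hcard]
  have hle : Γ.ncard ≤ ℓ * n + 1 := by rw [hcard]; exact hd
  have key : ∀ P : Γ, ∃ F : MvPolynomial (Fin (n + 1)) k, F.IsHomogeneous ℓ ∧
      eval (Projectivization.rep (P : Projectivization k (Fin (n + 1) → k))) F ≠ 0 ∧
      ∀ Q ∈ Γ, Q ≠ ↑P → eval (Projectivization.rep Q) F = 0 :=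
    fun P => interpolation hn hfin hlgp hle P.2
  choose Fp hFhom hFne hFz using key
  have surj : ∀ f : Γ → k, ∃ F : MvPolynomial (Fin (n + 1)) k, F.IsHomogeneous ℓ ∧
      ∀ P : Γ, eval (Projectivization.rep (P : Projectivization k (Fin (n + 1) → k))) F
        = f P := by
    intro f
    refine ⟨∑ P : Γ, (f P *
      (eval (Projectivization.rep (P : Projectivization k (Fin (n + 1) → k))) (Fp P))⁻¹) • Fp P,
      ?_, ?_⟩
    · rw [← mem_homogeneousSubmodule]
      exact Submodule.sum_mem _ fun P _ =>
        Submodule.smul_mem _ _ ((mem_homogeneousSubmodule _ _).2 (hFhom P))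
    · intro Q
      rw [map_sum, Finset.sum_eq_single Q]
      · rw [smul_eval, mul_assoc, inv_mul_cancel₀ (hFne Q), mul_one]
      · intro P _ hPQ
        rw [smul_eval, hFz P ↑Q Q.2 (fun h => hPQ (Subtype.ext h).symm), mul_zero]
      · intro h
        exact absurd (Finset.mem_univ Q) h
  refine ⟨?_, surj⟩
  let E : homogeneousSubmodule (Fin (n + 1)) k ℓ →ₗ[k] (Γ → k) :=
    { toFun := fun F P =>
        eval (Projectivization.rep (P : Projectivization k (Fin (n + 1) → k))) F.1
      map_add' := fun a b => by funext P; simp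
      map_smul' := fun c a => by funext P; simp [smul_eval]
    }
  have hEsurj : Function.Surjective E := by
    intro f
    obtain ⟨F, hF, hFeval⟩ := surj f
    exact ⟨⟨F, (mem_homogeneousSubmodule _ _).2 hF⟩, funext hFeval⟩
  have hrange : Module.finrank k (LinearMap.range E) = d := by
    rw [LinearMap.range_eq_top.2 hEsurj, finrank_top, Module.finrank_fintype_fun_eq_card, hcardΓ]
  have hker : LinearMap.ker E =
      Submodule.comap (homogeneousSubmodule (Fin (n + 1)) k ℓ).subtype
        (gradedVanishing k n Γ ℓ) := by
    ext F
    constructor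
    · intro hF
      refine Submodule.mem_comap.2 (Submodule.mem_inf.2 ⟨F.2, ?_⟩)
      intro P hP
      have := congrFun (LinearMap.mem_ker.1 hF) ⟨P, hP⟩
      exact this
    · intro hF
      have h2 := (Submodule.mem_inf.1 (Submodule.mem_comap.1 hF)).2
      refine LinearMap.mem_ker.2 (funext fun P => ?_)
      exact h2 P.1 P.2
  have hrn := LinearMap.finrank_range_add_finrank_ker E
  rw [finrank_hom] at hrn
  have hiso : Module.finrank k (gradedVanishing k n Γ ℓ)
      = Module.finrank k (LinearMap.ker E) := by
    rw [hker]
    exact (Submodule.comapSubtypeEquivOfLe inf_le_left).finrank_eq.symm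
  have hchoose : (n + ℓ).choose n = (n + ℓ).choose ℓ := by
    rw [← Nat.choose_symm (Nat.le_add_left ℓ n)]
    congr 1
    omega
  rw [hiso, hchoose]
  omega
end
end

section
/- Let Γ ⊆ Pⁿ be a finite set of exactly mn points in linearly general position for some integer m ≥ 2, and let F = h₁⋯h_{m+1} ∈ Φ(Γ)_{m+1} be a product of m+1 nonzero linear forms vanishing on Γ, ordered so that μ_Γ(F) = λ_Γ(h₁⋯h_m). If μ_Γ(F) ≤ mn − 2, then there exist G₁, G₂ ∈ Φ(Γ)_{m+1} such that F = G₁ + G₂ and μ_Γ(G_j) ≥ μ_Γ(F) + 1 for j = 1, 2. -/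
open MvPolynomial

noncomputable section

/-- Given a finite linearly independent family in a vector space, there is a linear
functional taking arbitrary prescribed values on it. -/
lemma exists_functional' {k V : Type*} [Field k] [AddCommGroup V] [Module k V]
    {ι : Type*} [Fintype ι] [DecidableEq ι] {v : ι → V}
    (li : LinearIndependent k v) (val : ι → k) :
    ∃ φ : V →ₗ[k] k, ∀ i, φ (v i) = val i := by
  classical
  let j : (ι → k) →ₗ[k] V :=
    { toFun := fun e => ∑ i, e i • v i
      map_add' := by
        intro a b
        simp [add_smul, Finset.sum_add_distrib]
      map_smul' := by
        intro c a
        simp [Finset.smul_sum, smul_smul] }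
  have hker : LinearMap.ker j = ⊥ := by
    rw [LinearMap.ker_eq_bot']
    intro e he
    funext i
    exact Fintype.linearIndependent_iff.mp li e he i
  obtain ⟨g, hg⟩ := j.exists_leftInverse_of_injective hker
  have hsingle : ∀ i, j (Pi.single i 1) = v i := by
    intro i
    simp only [j, LinearMap.coe_mk, AddHom.coe_mk]
    rw [Finset.sum_eq_single i]
    · simp
    · intro b _ hb; simp [Pi.single_apply, hb]
    · intro hi; exact absurd (Finset.mem_univ i) hi
  refine ⟨(∑ i, val i • LinearMap.proj i) ∘ₗ g, fun i => ?_⟩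
  have hgv : g (v i) = Pi.single i 1 := by
    rw [← hsingle i, ← LinearMap.comp_apply, hg, LinearMap.id_apply]
  simp only [LinearMap.comp_apply, hgv, LinearMap.sum_apply, LinearMap.smul_apply,
    LinearMap.proj_apply]
  rw [Finset.sum_eq_single i]
  · simp
  · intro b _ hb; simp [Pi.single_apply, hb]
  · intro hi; exact absurd (Finset.mem_univ i) hi

/-- A linear functional on `Fin N → k` is realized by a homogeneous degree-1 polynomial. -/
lemma exists_linear_poly' {k : Type*} [Field k] {N : ℕ} (φ : (Fin N → k) →ₗ[k] k) :
    ∃ ℓ : MvPolynomial (Fin N) k, ℓ.IsHomogeneous 1 ∧ ∀ v, eval v ℓ = φ v := by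
  refine ⟨∑ x, C (φ (Pi.single x 1)) * X x, ?_, ?_⟩
  · apply IsHomogeneous.sum
    intro x _
    simpa using (isHomogeneous_C _ (φ (Pi.single x 1))).mul (isHomogeneous_X k x)
  · intro v
    have hv : v = ∑ x, v x • (Pi.single x (1 : k) : Fin N → k) := by
      conv_lhs => rw [← Finset.univ_sum_single v]
      refine Finset.sum_congr rfl fun x _ => ?_
      rw [← Pi.single_smul x (v x) 1, smul_eq_mul, mul_one]
    conv_rhs => rw [hv]
    rw [map_sum]
    simp [mul_comm]

/-- On at most `n+1` points in linearly general position, a linear form can take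
arbitrary prescribed values. -/
lemma exists_linear_form' {k : Type*} [Field k] {n : ℕ}
    {Γ : Set (Projectivization k (Fin (n + 1) → k))} (hlgp : LinGenPos k n Γ)
    (T : Finset (Projectivization k (Fin (n + 1) → k))) (hT : ↑T ⊆ Γ)
    (hTc : T.card ≤ n + 1) (val : Projectivization k (Fin (n + 1) → k) → k) :
    ∃ ℓ : MvPolynomial (Fin (n + 1)) k, ℓ.IsHomogeneous 1 ∧
      ∀ P ∈ T, eval (Projectivization.rep P) ℓ = val P := by
  classical
  have li := hlgp T hT hTc
  obtain ⟨φ, hφ⟩ := exists_functional' li (fun p : T => val p)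
  obtain ⟨ℓ, h1, h2⟩ := exists_linear_poly' φ
  exact ⟨ℓ, h1, fun P hP => by rw [h2]; exact hφ ⟨P, hP⟩⟩

/-- The inductive step in the proof of Theorem 4.1: for `Γ` of `mn` points in linearly
general position, `m ≥ 2`, and `F = h₁⋯h_{m+1} ∈ Φ(Γ)_{m+1}` ordered so that
`μ_Γ(F) = λ_Γ(h₁⋯h_m)`, if `μ_Γ(F) ≤ mn - 2` then `F = G₁ + G₂` with
`G₁, G₂ ∈ Φ(Γ)_{m+1}` and `μ_Γ(G_j) ≥ μ_Γ(F) + 1`. -/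
theorem mu_induction_step (k : Type*) [Field k] [IsAlgClosed k] (n m : ℕ) (hn : 1 ≤ n)
    (hm : 2 ≤ m) (Γ : Set (Projectivization k (Fin (n + 1) → k)))
    (hfin : Γ.Finite) (hcard : Γ.ncard = m * n) (hlgp : LinGenPos k n Γ)
    (h : Fin (m + 1) → MvPolynomial (Fin (n + 1)) k)
    (hh : ∀ i, h i ≠ 0 ∧ (h i).IsHomogeneous 1)
    (hF : (∏ i, h i) ∈ gradedVanishing k n Γ (m + 1))
    (hord : (Finset.univ.sup fun i =>
        lambdaGamma k n Γ (∏ j ∈ Finset.univ.erase i, h j)) =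
      lambdaGamma k n Γ (∏ j ∈ Finset.univ.erase (Fin.last m), h j))
    (hmu : (Finset.univ.sup fun i =>
        lambdaGamma k n Γ (∏ j ∈ Finset.univ.erase i, h j)) ≤ m * n - 2) :
    ∃ g₁ g₂ : Fin (m + 1) → MvPolynomial (Fin (n + 1)) k,
      (∀ i, g₁ i ≠ 0 ∧ (g₁ i).IsHomogeneous 1) ∧
      (∀ i, g₂ i ≠ 0 ∧ (g₂ i).IsHomogeneous 1) ∧
      (∏ i, g₁ i) ∈ Phi k n Γ (m + 1) ∧ (∏ i, g₂ i) ∈ Phi k n Γ (m + 1) ∧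
      (∏ i, h i) = (∏ i, g₁ i) + (∏ i, g₂ i) ∧
      (Finset.univ.sup fun i =>
          lambdaGamma k n Γ (∏ j ∈ Finset.univ.erase i, h j)) + 1 ≤
        (Finset.univ.sup fun i =>
          lambdaGamma k n Γ (∏ j ∈ Finset.univ.erase i, g₁ j)) ∧
      (Finset.univ.sup fun i =>
          lambdaGamma k n Γ (∏ j ∈ Finset.univ.erase i, h j)) + 1 ≤
        (Finset.univ.sup fun i =>
          lambdaGamma k n Γ (∏ j ∈ Finset.univ.erase i, g₂ j)) := by
  classical
  set G : Finset (Projectivization k (Fin (n + 1) → k)) := hfin.toFinset with hGdef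
  have hGmem : ∀ P, P ∈ G ↔ P ∈ Γ := fun P => hfin.mem_toFinset
  have hGcard : G.card = m * n := by
    rw [← hcard]; exact (Set.ncard_eq_toFinset_card Γ hfin).symm
  have hmn : 2 ≤ m * n := le_trans (by norm_num) (Nat.mul_le_mul hm hn)
  have lamEq : ∀ (f : Fin (m + 1) → MvPolynomial (Fin (n + 1)) k)
      (s : Finset (Fin (m + 1))) (S : Finset (Projectivization k (Fin (n + 1) → k))),
      (∀ P, P ∈ S ↔ (P ∈ Γ ∧ ∃ j ∈ s, eval (Projectivization.rep P) (f j) = 0)) →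
      lambdaGamma k n Γ (∏ j ∈ s, f j) = S.card := by
    intro f s S hS
    have hset : {P ∈ Γ | eval (Projectivization.rep P) (∏ j ∈ s, f j) = 0} = ↑S := by
      ext P
      simp only [Set.mem_setOf_eq, Finset.mem_coe, hS, map_prod,
        Finset.prod_eq_zero_iff]
    rw [lambdaGamma, hset, Set.ncard_coe_finset]
  set μ := Finset.univ.sup
    (fun i => lambdaGamma k n Γ (∏ j ∈ Finset.univ.erase i, h j)) with hμdef
  -- the set of points covered by the first m forms
  have hSmFin : {P ∈ Γ | ∃ j ∈ Finset.univ.erase (Fin.last m),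
      eval (Projectivization.rep P) (h j) = 0}.Finite :=
    hfin.subset (fun P hP => hP.1)
  set Sm : Finset (Projectivization k (Fin (n + 1) → k)) := hSmFin.toFinset with hSmdef
  have hSmMem : ∀ P, P ∈ Sm ↔ (P ∈ Γ ∧ ∃ j ∈ Finset.univ.erase (Fin.last m),
      eval (Projectivization.rep P) (h j) = 0) := fun P => hSmFin.mem_toFinset
  have hμSm : μ = Sm.card := by
    rw [hord]; exact lamEq h _ Sm hSmMem
  have hSmG : Sm ⊆ G := fun P hP => (hGmem P).mpr ((hSmMem P).mp hP).1
  -- the set of points covered only by the last form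
  have hUFin : {P ∈ Γ | ∀ j, j ≠ Fin.last m →
      eval (Projectivization.rep P) (h j) ≠ 0}.Finite :=
    hfin.subset (fun P hP => hP.1)
  set U : Finset (Projectivization k (Fin (n + 1) → k)) := hUFin.toFinset with hUdef
  have hUMem : ∀ P, P ∈ U ↔ (P ∈ Γ ∧ ∀ j, j ≠ Fin.last m →
      eval (Projectivization.rep P) (h j) ≠ 0) := fun P => hUFin.mem_toFinset
  have hUcard : U.card = m * n - μ := by
    have hUG : U = G \ Sm := by
      ext P
      simp only [hUMem, Finset.mem_sdiff, hGmem, hSmMem, Finset.mem_erase,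
        Finset.mem_univ, and_true, not_exists, not_and]
      tauto
    rw [hUG, Finset.card_sdiff_of_subset hSmG, hGcard, hμSm]
  have hU2 : 1 < U.card := by omega
  obtain ⟨A, hA, B, hB, hAB⟩ := Finset.one_lt_card.mp hU2
  have hUprop : ∀ P ∈ U, ∀ j, j ≠ Fin.last m →
      eval (Projectivization.rep P) (h j) ≠ 0 :=
    fun P hP => ((hUMem P).mp hP).2
  have hUΓ : ∀ P ∈ U, P ∈ Γ := fun P hP => ((hUMem P).mp hP).1
  -- the sets of points covered, among the first m forms, only by the i-th one
  have hWFin : ∀ i : Fin (m + 1), {P ∈ Γ |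
      eval (Projectivization.rep P) (h i) = 0 ∧ ∀ j, j ≠ Fin.last m → j ≠ i →
        eval (Projectivization.rep P) (h j) ≠ 0}.Finite :=
    fun i => hfin.subset (fun P hP => hP.1)
  set W : Fin (m + 1) → Finset (Projectivization k (Fin (n + 1) → k)) :=
    fun i => (hWFin i).toFinset with hWdef
  have hWMem : ∀ i P, P ∈ W i ↔ (P ∈ Γ ∧
      eval (Projectivization.rep P) (h i) = 0 ∧ ∀ j, j ≠ Fin.last m → j ≠ i →
        eval (Projectivization.rep P) (h j) ≠ 0) := fun i P => (hWFin i).mem_toFinset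
  have exW : ∃ i₀, i₀ ≠ Fin.last m ∧ (W i₀).card < n := by
    by_contra hcon
    push_neg at hcon
    have hdisj : ∀ x ∈ Finset.univ.erase (Fin.last m),
        ∀ y ∈ Finset.univ.erase (Fin.last m), x ≠ y → Disjoint (W x) (W y) := by
      intro x hx y hy hxy
      rw [Finset.disjoint_left]
      intro P hPx hPy
      have h1 := ((hWMem x P).mp hPx).2.1
      have h2 := ((hWMem y P).mp hPy).2.2 x (Finset.mem_erase.mp hx).1 hxy
      exact h2 h1
    have hcards := Finset.card_biUnion hdisj
    have hsub : (Finset.univ.erase (Fin.last m)).biUnion W ⊆ Sm := by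
      intro P hP
      obtain ⟨i, hi, hPW⟩ := Finset.mem_biUnion.mp hP
      exact (hSmMem P).mpr ⟨((hWMem i P).mp hPW).1, ⟨i, hi, ((hWMem i P).mp hPW).2.1⟩⟩
    have hge : m * n ≤ ((Finset.univ.erase (Fin.last m)).biUnion W).card := by
      rw [hcards]
      calc m * n = ∑ _i ∈ Finset.univ.erase (Fin.last m), n := by
            rw [Finset.sum_const, Finset.card_erase_of_mem (Finset.mem_univ _),
              Finset.card_univ, Fintype.card_fin, smul_eq_mul]
            simp
        _ ≤ ∑ i ∈ Finset.univ.erase (Fin.last m), (W i).card :=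
            Finset.sum_le_sum (fun i hi => hcon i (Finset.mem_erase.mp hi).1)
    have hle : ((Finset.univ.erase (Fin.last m)).biUnion W).card ≤ Sm.card :=
      Finset.card_le_card hsub
    omega
  obtain ⟨i₀, hi₀last, hWi₀⟩ := exW
  have hWΓ : ∀ P ∈ W i₀, P ∈ Γ := fun P hP => ((hWMem i₀ P).mp hP).1
  have hAi₀ : eval (Projectivization.rep A) (h i₀) ≠ 0 := hUprop A hA i₀ hi₀last
  have hBi₀ : eval (Projectivization.rep B) (h i₀) ≠ 0 := hUprop B hB i₀ hi₀last
  set T : Finset (Projectivization k (Fin (n + 1) → k)) :=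
    insert A (insert B (W i₀)) with hTdef
  have hTcard : T.card ≤ n + 1 := by
    have h1 : T.card ≤ (insert B (W i₀)).card + 1 := Finset.card_insert_le _ _
    have h2 : (insert B (W i₀)).card ≤ (W i₀).card + 1 := Finset.card_insert_le _ _
    omega
  have hTΓ : ↑T ⊆ Γ := by
    intro P hP
    simp only [hTdef, Finset.coe_insert, Set.mem_insert_iff, Finset.mem_coe] at hP
    rcases hP with rfl | rfl | hP
    · exact hUΓ _ hA
    · exact hUΓ _ hB
    · exact hWΓ P hP
  obtain ⟨ℓ, hℓhom, hℓval⟩ := exists_linear_form' hlgp T hTΓ hTcard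
    (fun P => if P = B then eval (Projectivization.rep B) (h i₀) else 0)
  have hBT : B ∈ T := by simp [hTdef]
  have hAT : A ∈ T := by simp [hTdef]
  have hℓB : eval (Projectivization.rep B) ℓ = eval (Projectivization.rep B) (h i₀) := by
    have := hℓval B hBT; simpa using this
  have hℓA : eval (Projectivization.rep A) ℓ = 0 := by
    have := hℓval A hAT; rwa [if_neg hAB] at this
  have hWnotB : ∀ P ∈ W i₀, P ≠ B := by
    intro P hP hPB
    exact hBi₀ (hPB ▸ ((hWMem i₀ P).mp hP).2.1)
  have hℓW : ∀ P ∈ W i₀, eval (Projectivization.rep P) ℓ = 0 := by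
    intro P hP
    have hPT : P ∈ T := by simp [hTdef, hP]
    have := hℓval P hPT
    rwa [if_neg (hWnotB P hP)] at this
  have hℓ0 : ℓ ≠ 0 := by
    intro hz
    rw [hz, map_zero] at hℓB
    exact hBi₀ hℓB.symm
  have hδ0 : h i₀ - ℓ ≠ 0 := by
    intro hz
    apply hAi₀
    have hz0 : eval (Projectivization.rep A) (h i₀ - ℓ) = 0 := by rw [hz, map_zero]
    rwa [map_sub, hℓA, sub_zero] at hz0
  have hFvan : ∀ P ∈ Γ, eval (Projectivization.rep P) (∏ i, h i) = 0 :=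
    fun P hP => hF.2 P hP
  have vanish : ∀ ℓ' : MvPolynomial (Fin (n + 1)) k,
      (∀ P ∈ W i₀, eval (Projectivization.rep P) ℓ' = 0) →
      ∀ P ∈ Γ, eval (Projectivization.rep P) (∏ j, Function.update h i₀ ℓ' j) = 0 := by
    intro ℓ' hℓ' P hP
    rw [map_prod, Finset.prod_eq_zero_iff]
    by_cases hc : ∃ j, j ≠ i₀ ∧ eval (Projectivization.rep P) (h j) = 0
    · obtain ⟨j, hj, hj0⟩ := hc
      exact ⟨j, Finset.mem_univ j, by rwa [Function.update_of_ne hj]⟩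
    · push_neg at hc
      refine ⟨i₀, Finset.mem_univ _, ?_⟩
      rw [Function.update_self]
      apply hℓ'
      have hP0 := hFvan P hP
      rw [map_prod, Finset.prod_eq_zero_iff] at hP0
      obtain ⟨j, -, hj0⟩ := hP0
      have hji : j = i₀ := by
        by_contra hne
        exact hc j hne hj0
      exact (hWMem i₀ P).mpr ⟨hP, hji ▸ hj0, fun j' _ hj'i => hc j' hj'i⟩
  have phiMem : ∀ g : Fin (m + 1) → MvPolynomial (Fin (n + 1)) k,
      (∀ i, g i ≠ 0 ∧ (g i).IsHomogeneous 1) →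
      (∀ P ∈ Γ, eval (Projectivization.rep P) (∏ j, g j) = 0) →
      (∏ i, g i) ∈ Phi k n Γ (m + 1) := by
    intro g hg hv
    refine ⟨Submodule.mem_inf.mpr ⟨?_, hv⟩, g, hg, rfl⟩
    rw [mem_homogeneousSubmodule]
    have := IsHomogeneous.prod Finset.univ g (fun _ => 1) (fun i _ => (hg i).2)
    simpa using this
  have hprodsplit : ∀ ℓ' : MvPolynomial (Fin (n + 1)) k,
      ∏ j, Function.update h i₀ ℓ' j = ℓ' * ∏ j ∈ Finset.univ.erase i₀, h j := by
    intro ℓ'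
    rw [← Finset.mul_prod_erase Finset.univ _ (Finset.mem_univ i₀), Function.update_self]
    congr 1
    refine Finset.prod_congr rfl fun j hj => ?_
    exact Function.update_of_ne (Finset.mem_erase.mp hj).1 _ _
  have hδW : ∀ P ∈ W i₀, eval (Projectivization.rep P) (h i₀ - ℓ) = 0 := by
    intro P hP
    rw [map_sub, ((hWMem i₀ P).mp hP).2.1, hℓW P hP, sub_zero]
  have hδB : eval (Projectivization.rep B) (h i₀ - ℓ) = 0 := by
    rw [map_sub, hℓB, sub_self]
  have supBound : ∀ (ℓ' : MvPolynomial (Fin (n + 1)) k)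
      (E : Projectivization k (Fin (n + 1) → k)), E ∈ U →
      eval (Projectivization.rep E) ℓ' = 0 →
      (∀ P ∈ W i₀, eval (Projectivization.rep P) ℓ' = 0) →
      μ + 1 ≤ Finset.univ.sup (fun i => lambdaGamma k n Γ
        (∏ j ∈ Finset.univ.erase i, Function.update h i₀ ℓ' j)) := by
    intro ℓ' E hEU hEℓ hWℓ
    refine le_trans ?_ (Finset.le_sup (Finset.mem_univ (Fin.last m)))
    have hSgFin : {P ∈ Γ | ∃ j ∈ Finset.univ.erase (Fin.last m),
        eval (Projectivization.rep P) (Function.update h i₀ ℓ' j) = 0}.Finite :=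
      hfin.subset (fun P hP => hP.1)
    have hSgMem : ∀ P, P ∈ hSgFin.toFinset ↔ (P ∈ Γ ∧
        ∃ j ∈ Finset.univ.erase (Fin.last m),
          eval (Projectivization.rep P) (Function.update h i₀ ℓ' j) = 0) :=
      fun P => hSgFin.mem_toFinset
    rw [lamEq (Function.update h i₀ ℓ') (Finset.univ.erase (Fin.last m))
      hSgFin.toFinset hSgMem, hμSm]
    have hi₀mem : i₀ ∈ Finset.univ.erase (Fin.last m) :=
      Finset.mem_erase.mpr ⟨hi₀last, Finset.mem_univ _⟩
    have hsub : insert E Sm ⊆ hSgFin.toFinset := by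
      intro P hP
      rcases Finset.mem_insert.mp hP with rfl | hP
      · exact (hSgMem _).mpr ⟨hUΓ _ hEU, ⟨i₀, hi₀mem, by rw [Function.update_self]; exact hEℓ⟩⟩
      · obtain ⟨hPΓ, j, hjmem, hj0⟩ := (hSmMem P).mp hP
        by_cases hc : ∃ j', (j' ≠ Fin.last m ∧ j' ≠ i₀) ∧
            eval (Projectivization.rep P) (h j') = 0
        · obtain ⟨j', ⟨hj'l, hj'i⟩, hj'0⟩ := hc
          exact (hSgMem P).mpr ⟨hPΓ, j',
            Finset.mem_erase.mpr ⟨hj'l, Finset.mem_univ _⟩,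
            by rwa [Function.update_of_ne hj'i]⟩
        · push_neg at hc
          have hji : j = i₀ := by
            by_contra hne
            exact hc j ⟨(Finset.mem_erase.mp hjmem).1, hne⟩ hj0
          have hPW : P ∈ W i₀ := (hWMem i₀ P).mpr ⟨hPΓ, hji ▸ hj0,
            fun j' hl hi => hc j' ⟨hl, hi⟩⟩
          exact (hSgMem P).mpr ⟨hPΓ, i₀, hi₀mem,
            by rw [Function.update_self]; exact hWℓ P hPW⟩
    have hEnot : E ∉ Sm := by
      intro hE
      obtain ⟨-, j, hjmem, hj0⟩ := (hSmMem E).mp hE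
      exact hUprop E hEU j (Finset.mem_erase.mp hjmem).1 hj0
    calc Sm.card + 1 = (insert E Sm).card := (Finset.card_insert_of_notMem hEnot).symm
      _ ≤ _ := Finset.card_le_card hsub
  refine ⟨Function.update h i₀ ℓ, Function.update h i₀ (h i₀ - ℓ), ?_, ?_, ?_, ?_, ?_, ?_, ?_⟩
  · intro i
    by_cases hi : i = i₀
    · rw [hi, Function.update_self]; exact ⟨hℓ0, hℓhom⟩
    · rw [Function.update_of_ne hi]; exact hh i
  · intro i
    by_cases hi : i = i₀
    · rw [hi, Function.update_self]
      exact ⟨hδ0, ((hh i₀).2).sub hℓhom⟩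
    · rw [Function.update_of_ne hi]; exact hh i
  · refine phiMem _ ?_ (vanish ℓ hℓW)
    intro i
    by_cases hi : i = i₀
    · rw [hi, Function.update_self]; exact ⟨hℓ0, hℓhom⟩
    · rw [Function.update_of_ne hi]; exact hh i
  · refine phiMem _ ?_ (vanish (h i₀ - ℓ) hδW)
    intro i
    by_cases hi : i = i₀
    · rw [hi, Function.update_self]
      exact ⟨hδ0, ((hh i₀).2).sub hℓhom⟩
    · rw [Function.update_of_ne hi]; exact hh i
  · rw [hprodsplit, hprodsplit,
      ← Finset.mul_prod_erase Finset.univ h (Finset.mem_univ i₀)]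
    ring
  · exact supBound ℓ A hA hℓA hℓW
  · exact supBound (h i₀ - ℓ) B hB hδB hδW
end
end
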